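/- If the planar 3-SAT formula φ is satisfiable, then the constructed 3-plane drawing Γ_φ admits a SPED of ink exactly L, where L counts 10 for each red-green segment pair in a variable gadget, 6 for each red-green segment pair in a wire, and 12 for each clause gadget; conversely, if Γ_φ has a SPED with ink at least L, then every red-green pair and every clause gadget attains its maximum contribution, forcing each variable gadget into one of its two states. -/
import Mathlib


/-! STATEMENT 17: correctness of the NP-hardness reduction for MaxSPED (Theorem 1).

We model the constructed 3-plane drawing `Γ_φ` of a planar 3-SAT formula `φ` at the level
of its segments, lengths and crossing distances (a SPED only depends on these data).
The formula has `n` variables and `m` clauses, clause `j`'s `k`-th literal being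
`lit j k = (variable, polarity)`.

Segments of `Γ_φ`:
* for each occurrence `(j,k)` a red-green pair of variable-gadget segments of length 8
  (the variable gadget of `x` is a cycle of these pairs over all occurrences of `x`,
  consecutive pairs being given by a permutation `π` that is a cycle on the occurrences
  of each variable);
* for each occurrence a wire consisting of a red-green pair of segments of length 4;
* for each clause three pairwise crossing segments of length 8.

All red-green crossings and clause-triangle crossings are at distance 1 from an endpoint
of each involved segment; the first wire segment crosses the corresponding variable
segment (green for a positive literal, red for a negative one) splitting it 3:5, and the
last wire segment crosses the corresponding clause segment splitting it 3:5.

A SPED assigns to each segment `s` a per-side symmetric stub length `t s` with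
`0 < t s ≤ len s / 2` (the maximal value meaning the full segment is drawn); a drawn part
covers a crossing point at distance `d` from the nearer endpoint iff `t s > d`, and
validity forbids both segments of a crossing pair to cover the crossing point.
The ink is `∑ s, 2 * t s`, and `L = 10·(3m) + 6·(3m) + 12·m = 60·m` counts 10 for each
variable red-green pair, 6 for each wire pair and 12 for each clause gadget. -/

/-- The segments of `Γ_φ`: variable-gadget segments (occurrence, red?), wire segments
(occurrence, second?), and clause segments. -/
abbrev RSeg (m : ℕ) :=
  (Fin m × Fin 3 × Bool) ⊕ (Fin m × Fin 3 × Bool) ⊕ (Fin m × Fin 3)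

def vseg {m : ℕ} (j : Fin m) (k : Fin 3) (red : Bool) : RSeg m := Sum.inl (j, k, red)
def wseg {m : ℕ} (j : Fin m) (k : Fin 3) (snd : Bool) : RSeg m := Sum.inr (Sum.inl (j, k, snd))
def cseg {m : ℕ} (j : Fin m) (k : Fin 3) : RSeg m := Sum.inr (Sum.inr (j, k))

/-- Segment lengths: 8 for variable and clause segments, 4 for wire segments. -/
def rlen {m : ℕ} : RSeg m → ℝ
  | Sum.inl _ => 8
  | Sum.inr (Sum.inl _) => 4
  | Sum.inr (Sum.inr _) => 8


lemma sum_rseg {m : ℕ} (f : RSeg m → ℝ) :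
    ∑ s, f s = ∑ p : Fin m × Fin 3,
      (f (vseg p.1 p.2 false) + f (vseg p.1 p.2 true) +
       (f (wseg p.1 p.2 false) + f (wseg p.1 p.2 true)) + f (cseg p.1 p.2)) := by
  simp only [Fintype.sum_sum_type, Fintype.sum_prod_type, Fintype.sum_bool, vseg, wseg, cseg,
    Finset.sum_add_distrib]
  ring

lemma all_eq_of_sum_ge {ι : Type*} [Fintype ι] {f : ι → ℝ} {c : ℝ}
    (h : ∀ i, f i ≤ c) (hs : (Fintype.card ι : ℝ) * c ≤ ∑ i, f i) : ∀ i, f i = c := by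
  by_contra hne
  push_neg at hne
  obtain ⟨i, hi⟩ := hne
  have hlt : f i < c := lt_of_le_of_ne (h i) hi
  have h2 : ∑ i, f i < ∑ _i : ι, c :=
    Finset.sum_lt_sum (fun j _ => h j) ⟨i, Finset.mem_univ i, hlt⟩
  rw [Finset.sum_const, Finset.card_univ, nsmul_eq_mul] at h2
  linarith

theorem stmt_17 (n m : ℕ)
    (lit : Fin m → Fin 3 → Fin n × Bool)
    -- the cyclic successor of an occurrence within its variable gadget
    (π : Equiv.Perm (Fin m × Fin 3))
    (hπvar : ∀ p, (lit (π p).1 (π p).2).1 = (lit p.1 p.2).1)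
    (hπcyc : ∀ x : Fin n, π.IsCycleOn {p : Fin m × Fin 3 | (lit p.1 p.2).1 = x})
    (valid : (RSeg m → ℝ) → Prop)
    (hvalid : ∀ t, valid t ↔
      ((∀ s, 0 < t s ∧ t s ≤ rlen s / 2) ∧
       -- red-green crossings inside a variable-gadget pair (distance 1 : 1)
       (∀ j k, ¬ (1 < t (vseg j k false) ∧ 1 < t (vseg j k true))) ∧
       -- crossings between consecutive pairs of the variable cycle (distance 1 : 1)
       (∀ j k, ¬ (1 < t (vseg j k true) ∧
                  1 < t (vseg (π (j, k)).1 (π (j, k)).2 false))) ∧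
       -- first wire segment crosses the variable segment of its literal (1 : 3 split)
       (∀ j k, ¬ (1 < t (wseg j k false) ∧ 3 < t (vseg j k (!(lit j k).2)))) ∧
       -- red-green crossing inside the wire pair (distance 1 : 1)
       (∀ j k, ¬ (1 < t (wseg j k false) ∧ 1 < t (wseg j k true))) ∧
       -- last wire segment crosses its clause segment (1 : 3 split)
       (∀ j k, ¬ (1 < t (wseg j k true) ∧ 3 < t (cseg j k))) ∧
       -- the clause triangle: pairwise crossings (distance 1 : 1)
       (∀ j k k', k ≠ k' → ¬ (1 < t (cseg j k) ∧ 1 < t (cseg j k'))))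
    )
    (ink : (RSeg m → ℝ) → ℝ) (hink : ∀ t, ink t = ∑ s, 2 * t s)
    (L : ℝ) (hL : L = 60 * m) :
    -- if φ is satisfiable, Γ_φ has a SPED of ink exactly L
    ((∃ σ : Fin n → Bool, ∀ j, ∃ k, σ (lit j k).1 = (lit j k).2) →
      ∃ t, valid t ∧ ink t = L) ∧
    -- conversely, in any SPED of ink at least L every red-green pair and every clause
    -- gadget attains its maximum contribution, forcing each variable gadget into one of
    -- its two states
    (∀ t, valid t → L ≤ ink t →
      (∀ j k, 2 * (t (vseg j k false) + t (vseg j k true)) = 10) ∧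
      (∀ j k, 2 * (t (wseg j k false) + t (wseg j k true)) = 6) ∧
      (∀ j, ∑ k, 2 * t (cseg j k) = 12) ∧
      (∀ x : Fin n,
        (∀ j k, (lit j k).1 = x → t (vseg j k true) = 4 ∧ t (vseg j k false) = 1) ∨
        (∀ j k, (lit j k).1 = x → t (vseg j k true) = 1 ∧ t (vseg j k false) = 4))) := by
  constructor
  · -- forward direction
    rintro ⟨σ, hσ⟩
    choose k₀ hk₀ using hσ
    set t : RSeg m → ℝ := fun s =>
      match s with
      | Sum.inl (j, k, c) => if c = σ (lit j k).1 then 4 else 1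
      | Sum.inr (Sum.inl (j, k, c)) =>
          if c = (σ (lit j k).1 == (lit j k).2) then 1 else 2
      | Sum.inr (Sum.inr (j, k)) => if k = k₀ j then 4 else 1
      with ht
    have tv : ∀ j k c, t (vseg j k c) = if c = σ (lit j k).1 then 4 else 1 := fun _ _ _ => rfl
    have tw : ∀ j k c, t (wseg j k c) = if c = (σ (lit j k).1 == (lit j k).2) then 1 else 2 :=
      fun _ _ _ => rfl
    have tc : ∀ j k, t (cseg j k) = if k = k₀ j then 4 else 1 := fun _ _ => rfl
    refine ⟨t, ?_, ?_⟩
    · rw [hvalid]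
      refine ⟨?_, ?_, ?_, ?_, ?_, ?_, ?_⟩
      · rintro (⟨j, k, c⟩ | ⟨j, k, c⟩ | ⟨j, k⟩) <;>
          simp only [ht, rlen] <;> split_ifs <;> norm_num
      · intro j k
        rw [tv, tv]
        rcases Bool.eq_false_or_eq_true (σ (lit j k).1) with h | h <;>
          simp [h] <;> norm_num
      · intro j k
        rw [tv, tv, hπvar (j, k)]
        rcases Bool.eq_false_or_eq_true (σ (lit j k).1) with h | h <;>
          simp [h] <;> norm_num
      · intro j k
        rw [tw, tv]
        rcases Bool.eq_false_or_eq_true (σ (lit j k).1 == (lit j k).2) with h | h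
        · -- satisfied: σ x = b so !b ≠ σ x
          have hb : σ (lit j k).1 = (lit j k).2 := by simpa using h
          simp [h, ← hb]
        ·
          simp [h]
      · intro j k
        rw [tw, tw]
        rcases Bool.eq_false_or_eq_true (σ (lit j k).1 == (lit j k).2) with h | h <;>
          simp [h] <;> norm_num
      · intro j k
        rw [tw, tc]
        by_cases hk : k = k₀ j
        · subst hk
          have hsat : (σ (lit j (k₀ j)).1 == (lit j (k₀ j)).2) = true := by simpa using hk₀ j
          simp [hsat]
        · simp [hk]
      · intro j k k' hkk
        rw [tc, tc]
        by_cases h1 : k = k₀ j <;> by_cases h2 : k' = k₀ j <;> simp_all <;> norm_num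
    · rw [hink, hL, sum_rseg (fun s => 2 * t s)]
      have hterm : ∀ p : Fin m × Fin 3,
          (2 * t (vseg p.1 p.2 false) + 2 * t (vseg p.1 p.2 true) +
           (2 * t (wseg p.1 p.2 false) + 2 * t (wseg p.1 p.2 true)) + 2 * t (cseg p.1 p.2))
          = 16 + 2 * (if p.2 = k₀ p.1 then (4:ℝ) else 1) := by
        intro p
        rw [tv, tv, tw, tw, tc]
        rcases Bool.eq_false_or_eq_true (σ (lit p.1 p.2).1) with h | h <;>
          rcases Bool.eq_false_or_eq_true ((lit p.1 p.2).2) with hb | hb <;>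
            simp [h, hb] <;> norm_num
      rw [Finset.sum_congr rfl (fun p _ => hterm p)]
      rw [Finset.sum_add_distrib, Finset.sum_const, Finset.card_univ]
      have hcs : ∑ p : Fin m × Fin 3, 2 * (if p.2 = k₀ p.1 then (4:ℝ) else 1)
          = ∑ j : Fin m, ∑ k : Fin 3, 2 * (if k = k₀ j then (4:ℝ) else 1) := by
        rw [Fintype.sum_prod_type]
      have hinner : ∀ j : Fin m, ∑ k : Fin 3, 2 * (if k = k₀ j then (4:ℝ) else 1) = 12 := by
        intro j
        have : ∀ k : Fin 3, 2 * (if k = k₀ j then (4:ℝ) else 1)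
            = 2 + (if k = k₀ j then (6:ℝ) else 0) := by
          intro k; split_ifs <;> norm_num
        simp_rw [this, Finset.sum_add_distrib, Finset.sum_const, Finset.sum_ite_eq']
        norm_num
      rw [hcs, Finset.sum_congr rfl (fun j _ => hinner j), Finset.sum_const, Finset.card_univ]
      simp [Fintype.card_prod]
      ring
  · -- converse direction
    intro t hv hLle
    rw [hvalid] at hv
    obtain ⟨hb, hvv, hvc, hwv, hww, hwc, hcc⟩ := hv
    have hbv : ∀ j k c, t (vseg j k c) ≤ 4 := by
      intro j k c; have := (hb (vseg j k c)).2; simp only [vseg, rlen] at this ⊢; linarith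
    have hbw : ∀ j k c, t (wseg j k c) ≤ 2 := by
      intro j k c; have := (hb (wseg j k c)).2; simp only [wseg, rlen] at this ⊢; linarith
    have hbc : ∀ j k, t (cseg j k) ≤ 4 := by
      intro j k; have := (hb (cseg j k)).2; simp only [cseg, rlen] at this ⊢; linarith
    have hpv : ∀ j k c, 0 < t (vseg j k c) := fun j k c => (hb (vseg j k c)).1
    have hpw : ∀ j k c, 0 < t (wseg j k c) := fun j k c => (hb (wseg j k c)).1
    have hpc : ∀ j k, 0 < t (cseg j k) := fun j k => (hb (cseg j k)).1
    have hA : ∀ j k, t (vseg j k false) + t (vseg j k true) ≤ 5 := by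
      intro j k
      have b1 := hbv j k true
      have b2 := hbv j k false
      rcases not_and_or.1 (hvv j k) with h | h <;> push_neg at h <;> linarith
    have hW : ∀ j k, t (wseg j k false) + t (wseg j k true) ≤ 3 := by
      intro j k
      have b1 := hbw j k true
      have b2 := hbw j k false
      rcases not_and_or.1 (hww j k) with h | h <;> push_neg at h <;> linarith
    have hC : ∀ j, ∑ k, t (cseg j k) ≤ 6 := by
      intro j
      rw [Fin.sum_univ_three]
      have h01 := hcc j 0 1 (by decide)
      have h02 := hcc j 0 2 (by decide)
      have h12 := hcc j 1 2 (by decide)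
      have b0 := hbc j 0; have b1 := hbc j 1; have b2 := hbc j 2
      by_cases h0 : 1 < t (cseg j 0)
      · have c1 : ¬ 1 < t (cseg j 1) := fun h => h01 ⟨h0, h⟩
        have c2 : ¬ 1 < t (cseg j 2) := fun h => h02 ⟨h0, h⟩
        push_neg at c1 c2; linarith
      · push_neg at h0
        by_cases h1 : 1 < t (cseg j 1)
        · have c2 : ¬ 1 < t (cseg j 2) := fun h => h12 ⟨h1, h⟩
          push_neg at c2; linarith
        · push_neg at h1; linarith
    -- total ink decomposition
    have hsum : ink t = 2 * ((∑ p : Fin m × Fin 3,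
        (t (vseg p.1 p.2 false) + t (vseg p.1 p.2 true) +
         (t (wseg p.1 p.2 false) + t (wseg p.1 p.2 true)))) + ∑ j : Fin m, ∑ k, t (cseg j k)) := by
      rw [hink, sum_rseg (fun s => 2 * t s)]
      have hcl : (∑ j : Fin m, ∑ k, t (cseg j k)) = ∑ p : Fin m × Fin 3, t (cseg p.1 p.2) := by
        rw [Fintype.sum_prod_type]
      rw [hcl, mul_add, Finset.mul_sum, Finset.mul_sum, ← Finset.sum_add_distrib]
      exact Finset.sum_congr rfl (fun p _ => by ring)
    set g : Fin m × Fin 3 → ℝ := fun p =>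
      t (vseg p.1 p.2 false) + t (vseg p.1 p.2 true) +
        (t (wseg p.1 p.2 false) + t (wseg p.1 p.2 true)) with hg
    set h : Fin m → ℝ := fun j => ∑ k, t (cseg j k) with hh
    have hgle : ∀ p, g p ≤ 8 := by
      intro p; have := hA p.1 p.2; have := hW p.1 p.2; simp only [hg]; linarith
    have hhle : ∀ j, h j ≤ 6 := hC
    have hgsum : ∑ p, g p ≤ 24 * m := by
      calc ∑ p, g p ≤ ∑ _p : Fin m × Fin 3, (8:ℝ) := Finset.sum_le_sum (fun p _ => hgle p)
        _ = 24 * m := by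
          rw [Finset.sum_const, Finset.card_univ, nsmul_eq_mul]
          simp [Fintype.card_prod]; ring
    have hhsum : ∑ j, h j ≤ 6 * m := by
      calc ∑ j, h j ≤ ∑ _j : Fin m, (6:ℝ) := Finset.sum_le_sum (fun j _ => hhle j)
        _ = 6 * m := by rw [Finset.sum_const, Finset.card_univ, nsmul_eq_mul]; simp; ring
    have hink' : (60:ℝ) * m ≤ 2 * (∑ p, g p + ∑ j, h j) := by rw [← hsum, ← hL]; exact hLle
    have hgeq : ∀ p, g p = 8 := by
      apply all_eq_of_sum_ge hgle
      have : (Fintype.card (Fin m × Fin 3) : ℝ) = 3 * m := by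
        simp [Fintype.card_prod]; ring
      rw [this]; linarith
    have hheq : ∀ j, h j = 6 := by
      apply all_eq_of_sum_ge hhle
      have : (Fintype.card (Fin m) : ℝ) = m := by simp
      rw [this]; linarith
    have hAeq : ∀ j k, t (vseg j k false) + t (vseg j k true) = 5 := by
      intro j k
      have := hgeq (j, k); have := hA j k; have := hW j k
      simp only [hg] at *; linarith
    have hWeq : ∀ j k, t (wseg j k false) + t (wseg j k true) = 3 := by
      intro j k
      have := hgeq (j, k); have := hA j k; have := hW j k
      simp only [hg] at *; linarith
    have hstate : ∀ j k, (t (vseg j k false) = 1 ∧ t (vseg j k true) = 4) ∨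
        (t (vseg j k false) = 4 ∧ t (vseg j k true) = 1) := by
      intro j k
      have h5 := hAeq j k
      have bf := hbv j k false; have bt := hbv j k true
      rcases not_and_or.1 (hvv j k) with hle | hle <;> push_neg at hle
      · left; constructor <;> linarith
      · right; constructor <;> linarith
    have hprop : ∀ p : Fin m × Fin 3,
        t (vseg p.1 p.2 true) = 4 → t (vseg (π p).1 (π p).2 true) = 4 := by
      intro p hp
      have hc := hvc p.1 p.2
      rw [Prod.mk.eta] at hc
      rcases hstate (π p).1 (π p).2 with ⟨h1, h2⟩ | ⟨h1, h2⟩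
      · exact h2
      · exact absurd ⟨by rw [hp]; norm_num, by rw [h1]; norm_num⟩ hc
    have hpow : ∀ (N : ℕ) (p : Fin m × Fin 3), t (vseg p.1 p.2 true) = 4 →
        t (vseg ((π ^ N) p).1 ((π ^ N) p).2 true) = 4 := by
      intro N
      induction N with
      | zero => intro p hp; simpa using hp
      | succ k ih =>
        intro p hp
        have heq : (π ^ (k + 1)) p = (π ^ k) (π p) := by
          rw [pow_succ, Equiv.Perm.mul_apply]
        rw [heq]
        exact ih (π p) (hprop p hp)
    refine ⟨fun j k => by rw [hAeq j k]; ring, fun j k => by rw [hWeq j k]; ring, ?_, ?_⟩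
    · intro j
      have := hheq j
      simp only [hh] at this
      rw [← Finset.mul_sum, this]; ring
    · intro x
      by_cases hex : ∃ p : Fin m × Fin 3, (lit p.1 p.2).1 = x ∧ t (vseg p.1 p.2 true) = 4
      · left
        intro j k hjk
        obtain ⟨p, hpx, hp4⟩ := hex
        have hsc : π.SameCycle p (j, k) := (hπcyc x).2 hpx hjk
        obtain ⟨i, hi, hieq⟩ := hsc.exists_pow_eq'
        have h4 := hpow i p hp4
        rw [hieq] at h4
        refine ⟨h4, ?_⟩
        rcases hstate j k with ⟨h1, h2⟩ | ⟨h1, h2⟩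
        · exact h1
        · rw [h4] at h2; norm_num at h2
      · right
        push_neg at hex
        intro j k hjk
        rcases hstate j k with ⟨h1, h2⟩ | ⟨h1, h2⟩
        · exact absurd h2 (hex (j, k) hjk)
        · exact ⟨h2, h1⟩
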